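/- Let $A$ be a symmetric nonnegative real $n\times n$ matrix and let $p \ge 2$. Then the $p$-norm of $A$, i.e. the maximum of $|\sum_{i,j} a_{i,j} x_i y_j|$ over all vectors $x, y \in \mathbb{R}^n$ with $\ell^p$ norm $|x|_p = |y|_p = 1$, is equal to the maximum of $\sum_{i,j} a_{i,j} x_i x_j$ over all $x \in \mathbb{R}^n$ with $|x|_p = 1$. -/

import Mathlib

open Finset

/-- The `ℓ^p` norm of a vector in `ℝ^n`. -/
noncomputable def lpNorm {n : ℕ} (p : ℝ) (x : Fin n → ℝ) : ℝ :=
  (∑ i, |x i| ^ p) ^ (1 / p)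

-- power mean inequality, two variables
lemma pm_aux {q : ℝ} (hq : 1 ≤ q) {x y : ℝ} (hx : 0 ≤ x) (hy : 0 ≤ y) :
    (x + y) / 2 ≤ ((x ^ q + y ^ q) / 2) ^ (1 / q) := by
  have h := Real.arith_mean_le_rpow_mean (Finset.univ : Finset (Fin 2))
    ![1/2, 1/2] ![x, y] (by intro i _; fin_cases i <;> norm_num)
    (by simp [Fin.sum_univ_two]; norm_num) (by intro i _; fin_cases i <;> simpa) hq
  simp only [Fin.sum_univ_two, Matrix.cons_val_zero, Matrix.cons_val_one, Matrix.head_cons] at h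
  calc (x + y) / 2 = 1/2 * x + 1/2 * y := by ring
    _ ≤ (1/2 * x ^ q + 1/2 * y ^ q) ^ (1/q) := h
    _ = ((x ^ q + y ^ q) / 2) ^ (1/q) := by ring_nf

lemma key_aux {p : ℝ} (hp : 2 ≤ p) {a b c d : ℝ} (ha : 0 ≤ a) (hb : 0 ≤ b)
    (hc : 0 ≤ c) (hd : 0 ≤ d) :
    (a * d + b * c) / 2 ≤ ((a ^ p + b ^ p) / 2) ^ (1 / p) * ((c ^ p + d ^ p) / 2) ^ (1 / p) := by
  have hp0 : 0 < p := by linarith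
  set q := p / 2 with hqdef
  have hq1 : 1 ≤ q := by unfold q; linarith
  have hq0 : 0 < q := by linarith
  have hA : (0:ℝ) ≤ a ^ q := Real.rpow_nonneg ha q
  have hB : (0:ℝ) ≤ b ^ q := Real.rpow_nonneg hb q
  have hC : (0:ℝ) ≤ c ^ q := Real.rpow_nonneg hc q
  have hD : (0:ℝ) ≤ d ^ q := Real.rpow_nonneg hd q
  have step1 : (a * d + b * c) / 2 ≤ (((a*d) ^ q + (b*c) ^ q) / 2) ^ (1 / q) :=
    pm_aux hq1 (mul_nonneg ha hd) (mul_nonneg hb hc)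
  have hT0 : (0:ℝ) ≤ ((a*d) ^ q + (b*c) ^ q) / 2 := by positivity
  have hexp : 1 / q = 2 * (1 / p) := by field_simp [hqdef]; linarith
  have hsq : ∀ x : ℝ, 0 ≤ x → x ^ p = (x ^ q) ^ (2:ℕ) := by
    intro x hx
    rw [← Real.rpow_natCast (x ^ q) 2, ← Real.rpow_mul hx]
    push_cast
    rw [show q * (2:ℝ) = p by rw [hqdef]; ring]
  have step2 : ((((a*d) ^ q + (b*c) ^ q) / 2)) ^ (1 / q)
      ≤ ((a ^ p + b ^ p) / 2) ^ (1 / p) * ((c ^ p + d ^ p) / 2) ^ (1 / p) := by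
    rw [← Real.mul_rpow (by positivity) (by positivity), hexp, Real.rpow_mul hT0]
    apply Real.rpow_le_rpow (by positivity) _ (by positivity)
    rw [Real.rpow_two]
    have had : (a*d) ^ q = a ^ q * d ^ q := Real.mul_rpow ha hd
    have hbc : (b*c) ^ q = b ^ q * c ^ q := Real.mul_rpow hb hc
    rw [had, hbc, hsq a ha, hsq b hb, hsq c hc, hsq d hd]
    nlinarith [sq_nonneg (a ^ q * c ^ q - b ^ q * d ^ q), mul_nonneg hA hD, mul_nonneg hB hC,
      mul_nonneg (mul_nonneg hA hD) (mul_nonneg hB hC)]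
  exact step1.trans step2

lemma lpNorm_sum_eq {n : ℕ} {p : ℝ} (hp0 : 0 < p) {x : Fin n → ℝ} (h : lpNorm p x = 1) :
    ∑ i, |x i| ^ p = 1 := by
  have hS : 0 ≤ ∑ i, |x i| ^ p :=
    Finset.sum_nonneg fun i _ => Real.rpow_nonneg (abs_nonneg _) _
  have h' := congrArg (fun t : ℝ => t ^ p) h
  simp only [lpNorm] at h'
  rwa [← Real.rpow_mul hS, one_div, inv_mul_cancel₀ hp0.ne', Real.rpow_one,
    Real.one_rpow] at h'

lemma lp_abs_le_one {n : ℕ} {p : ℝ} (hp0 : 0 < p) {x : Fin n → ℝ} (h : lpNorm p x = 1)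
    (i : Fin n) : |x i| ≤ 1 := by
  have hsum := lpNorm_sum_eq hp0 h
  have h1 : |x i| ^ p ≤ 1 := by
    rw [← hsum]
    exact Finset.single_le_sum (f := fun j => |x j| ^ p)
      (fun j _ => Real.rpow_nonneg (abs_nonneg _) _) (Finset.mem_univ i)
  by_contra hgt
  push_neg at hgt
  have : (1:ℝ) < |x i| ^ p := by
    calc (1:ℝ) = 1 ^ p := (Real.one_rpow p).symm
      _ < |x i| ^ p := Real.rpow_lt_rpow zero_le_one hgt hp0
  linarith

/-- **Theorem 1 (th2p).** If `A` is a symmetric nonnegative `n × n` matrix and `p ≥ 2`,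
then the `p`-norm of `A`, i.e. the maximum of `|∑ a_{ij} x_i y_j|` over `|x|_p = |y|_p = 1`,
equals the maximum of `∑ a_{ij} x_i x_j` over `|x|_p = 1`. -/
theorem pNorm_eq_max_quadratic_of_symm_nonneg {n : ℕ} {p : ℝ} (hp : 2 ≤ p)
    (A : Matrix (Fin n) (Fin n) ℝ) (hsym : A.IsSymm) (hA : ∀ i j, 0 ≤ A i j) :
    sSup {v | ∃ x y : Fin n → ℝ, lpNorm p x = 1 ∧ lpNorm p y = 1 ∧
        v = |∑ i, ∑ j, A i j * x i * y j|}
      = sSup {v | ∃ x : Fin n → ℝ, lpNorm p x = 1 ∧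
        v = ∑ i, ∑ j, A i j * x i * x j} := by
  have hp0 : 0 < p := by linarith
  by_cases hn : n = 0
  · subst hn
    have hx : ∀ x : Fin 0 → ℝ, lpNorm p x ≠ 1 := by
      intro x h
      simp only [lpNorm, Finset.univ_eq_empty, Finset.sum_empty] at h
      rw [Real.zero_rpow (by positivity : (1:ℝ)/p ≠ 0)] at h
      norm_num at h
    have e1 : {v | ∃ x y : Fin 0 → ℝ, lpNorm p x = 1 ∧ lpNorm p y = 1 ∧
        v = |∑ i, ∑ j, A i j * x i * y j|} = ∅ := by
      ext v
      simp only [Set.mem_setOf_eq, Set.mem_empty_iff_false, iff_false, not_exists]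
      rintro x y ⟨h1, -⟩
      exact hx x h1
    have e2 : {v | ∃ x : Fin 0 → ℝ, lpNorm p x = 1 ∧
        v = ∑ i, ∑ j, A i j * x i * x j} = ∅ := by
      ext v
      simp only [Set.mem_setOf_eq, Set.mem_empty_iff_false, iff_false, not_exists]
      rintro x ⟨h1, -⟩
      exact hx x h1
    rw [e1, e2]
  · set S1 := {v | ∃ x y : Fin n → ℝ, lpNorm p x = 1 ∧ lpNorm p y = 1 ∧
        v = |∑ i, ∑ j, A i j * x i * y j|} with hS1def
    set S2 := {v | ∃ x : Fin n → ℝ, lpNorm p x = 1 ∧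
        v = ∑ i, ∑ j, A i j * x i * x j} with hS2def
    set i0 : Fin n := ⟨0, Nat.pos_of_ne_zero hn⟩ with hi0
    set e : Fin n → ℝ := fun i => if i = i0 then 1 else 0 with he
    have he0 : ∀ i, 0 ≤ e i := by
      intro i; rw [he]; dsimp; split <;> norm_num
    have he1 : lpNorm p e = 1 := by
      simp only [lpNorm, he]
      have : ∑ i, |if i = i0 then (1:ℝ) else 0| ^ p = 1 := by
        rw [Finset.sum_eq_single i0]
        · simp
        · intro j _ hj; simp [hj, Real.zero_rpow hp0.ne']
        · simp
      rw [this, Real.one_rpow]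
    have hbound : ∀ x y : Fin n → ℝ, lpNorm p x = 1 → lpNorm p y = 1 →
        |∑ i, ∑ j, A i j * x i * y j| ≤ ∑ i, ∑ j, A i j := by
      intro x y hx hy
      calc |∑ i, ∑ j, A i j * x i * y j| ≤ ∑ i, |∑ j, A i j * x i * y j| :=
            Finset.abs_sum_le_sum_abs _ _
        _ ≤ ∑ i, ∑ j, |A i j * x i * y j| :=
            Finset.sum_le_sum fun i _ => Finset.abs_sum_le_sum_abs _ _
        _ ≤ ∑ i, ∑ j, A i j := by
            apply Finset.sum_le_sum; intro i _
            apply Finset.sum_le_sum; intro j _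
            rw [abs_mul, abs_mul, abs_of_nonneg (hA i j)]
            have h1 : A i j * |x i| ≤ A i j * 1 :=
              mul_le_mul_of_nonneg_left (lp_abs_le_one hp0 hx i) (hA i j)
            have h2 : A i j * |x i| * |y j| ≤ A i j * 1 * 1 :=
              mul_le_mul h1 (lp_abs_le_one hp0 hy j) (abs_nonneg _)
                (by have := hA i j; linarith)
            calc A i j * |x i| * |y j| ≤ A i j * 1 * 1 := h2
              _ = A i j := by ring
    have hbdd1 : BddAbove S1 := by
      refine ⟨∑ i, ∑ j, A i j, ?_⟩
      rintro v ⟨x, y, hx, hy, rfl⟩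
      exact hbound x y hx hy
    have hbdd2 : BddAbove S2 := by
      refine ⟨∑ i, ∑ j, A i j, ?_⟩
      rintro v ⟨x, hx, rfl⟩
      exact le_trans (le_abs_self _) (hbound x x hx hx)
    have hmem1 : |∑ i, ∑ j, A i j * e i * e j| ∈ S1 := ⟨e, e, he1, he1, rfl⟩
    have hS1nonneg : 0 ≤ sSup S1 := le_trans (abs_nonneg _) (le_csSup hbdd1 hmem1)
    have hmem2 : (∑ i, ∑ j, A i j * e i * e j) ∈ S2 := ⟨e, he1, rfl⟩
    have hS2nonneg : 0 ≤ sSup S2 := by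
      refine le_trans ?_ (le_csSup hbdd2 hmem2)
      apply Finset.sum_nonneg; intro i _
      apply Finset.sum_nonneg; intro j _
      exact mul_nonneg (mul_nonneg (hA i j) (he0 i)) (he0 j)
    apply le_antisymm
    · apply Real.sSup_le _ hS2nonneg
      rintro v ⟨x, y, hx, hy, rfl⟩
      set u : Fin n → ℝ := fun i => |x i| with hu
      set w : Fin n → ℝ := fun i => |y i| with hw
      have hu0 : ∀ i, 0 ≤ u i := fun i => abs_nonneg _
      have hw0 : ∀ i, 0 ≤ w i := fun i => abs_nonneg _
      set z : Fin n → ℝ := fun i => ((u i ^ p + w i ^ p) / 2) ^ (1/p) with hz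
      have hz0 : ∀ i, 0 ≤ z i := fun i => Real.rpow_nonneg (by positivity) _
      have hzp : ∀ i, z i ^ p = (u i ^ p + w i ^ p) / 2 := by
        intro i
        rw [hz]
        dsimp only
        rw [← Real.rpow_mul (by positivity), one_div, inv_mul_cancel₀ hp0.ne', Real.rpow_one]
      have hznorm : lpNorm p z = 1 := by
        simp only [lpNorm]
        have hsz : ∑ i, |z i| ^ p = 1 := by
          calc ∑ i, |z i| ^ p = ∑ i, ((u i ^ p + w i ^ p) / 2) := by
                apply Finset.sum_congr rfl; intro i _
                rw [abs_of_nonneg (hz0 i), hzp i]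
            _ = ((∑ i, u i ^ p) + ∑ i, w i ^ p) / 2 := by
                rw [← Finset.sum_div, Finset.sum_add_distrib]
            _ = 1 := by
                rw [show (∑ i, u i ^ p) = ∑ i, |x i| ^ p from rfl,
                  show (∑ i, w i ^ p) = ∑ i, |y i| ^ p from rfl,
                  lpNorm_sum_eq hp0 hx, lpNorm_sum_eq hp0 hy]
                norm_num
        rw [hsz, Real.one_rpow]
      have hQz : (∑ i, ∑ j, A i j * z i * z j) ∈ S2 := ⟨z, hznorm, rfl⟩
      have hLuw : |∑ i, ∑ j, A i j * x i * y j| ≤ ∑ i, ∑ j, A i j * u i * w j := by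
        calc |∑ i, ∑ j, A i j * x i * y j| ≤ ∑ i, |∑ j, A i j * x i * y j| :=
              Finset.abs_sum_le_sum_abs _ _
          _ ≤ ∑ i, ∑ j, |A i j * x i * y j| :=
              Finset.sum_le_sum fun i _ => Finset.abs_sum_le_sum_abs _ _
          _ = ∑ i, ∑ j, A i j * u i * w j := by
              apply Finset.sum_congr rfl; intro i _
              apply Finset.sum_congr rfl; intro j _
              rw [abs_mul, abs_mul, abs_of_nonneg (hA i j)]
      have hswap : ∑ i, ∑ j, A i j * w i * u j = ∑ i, ∑ j, A i j * u i * w j := by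
        rw [Finset.sum_comm]
        apply Finset.sum_congr rfl; intro i _
        apply Finset.sum_congr rfl; intro j _
        rw [hsym.apply i j]
        ring
      have hmid : ∑ i, ∑ j, A i j * u i * w j
          = ∑ i, ∑ j, A i j * ((u i * w j + w i * u j) / 2) := by
        have expand : ∑ i, ∑ j, A i j * ((u i * w j + w i * u j) / 2)
            = ((∑ i, ∑ j, A i j * u i * w j) + ∑ i, ∑ j, A i j * w i * u j) / 2 := by
          rw [← Finset.sum_add_distrib, Finset.sum_div]
          apply Finset.sum_congr rfl; intro i _
          rw [← Finset.sum_add_distrib, Finset.sum_div]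
          apply Finset.sum_congr rfl; intro j _
          ring
        rw [expand, hswap]
        ring
      have hfinal : ∑ i, ∑ j, A i j * u i * w j ≤ ∑ i, ∑ j, A i j * z i * z j := by
        rw [hmid]
        apply Finset.sum_le_sum; intro i _
        apply Finset.sum_le_sum; intro j _
        have hk := key_aux hp (hu0 i) (hw0 i) (hu0 j) (hw0 j)
        calc A i j * ((u i * w j + w i * u j) / 2) ≤ A i j * (z i * z j) :=
              mul_le_mul_of_nonneg_left hk (hA i j)
          _ = A i j * z i * z j := by ring
      calc |∑ i, ∑ j, A i j * x i * y j| ≤ ∑ i, ∑ j, A i j * u i * w j := hLuw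
        _ ≤ ∑ i, ∑ j, A i j * z i * z j := hfinal
        _ ≤ sSup S2 := le_csSup hbdd2 hQz
    · apply Real.sSup_le _ hS1nonneg
      rintro v ⟨x, hx, rfl⟩
      calc ∑ i, ∑ j, A i j * x i * x j ≤ |∑ i, ∑ j, A i j * x i * x j| := le_abs_self _
        _ ≤ sSup S1 := le_csSup hbdd1 ⟨x, x, hx, hx, rfl⟩
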